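/- Let Ω^f = Ω̃ × (0,H) with Ω̃ bounded Lipschitz. There exists C > 0 (independent of ε) such that for all u ∈ H¹(Ω^f), the trace on the graph surface Σ_ε = {(x̃, εγ(x̃/ε)) : x̃ ∈ Ω̃}, for γ L-Lipschitz periodic with values in [0,1] and ε ∈ (0, H), satisfies ‖u‖_{L²(Σ_ε)} ≤ C ‖u‖_{H¹(Ω^f)}. -/

import Mathlib

open MeasureTheory
open scoped ENNReal NNReal


private lemma aux_vertical {d' : ℕ} {Hh : ℝ} (hH : 0 < Hh)
    {u : (Fin d' → ℝ) × ℝ → ℝ} (hu : ContDiff ℝ 1 u)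
    (x : Fin d' → ℝ) {b : ℝ} (hb0 : 0 ≤ b) (hbH : b ≤ Hh) :
    (u (x, b))^2 ≤ ((1 + Hh)/Hh) *
      ∫ s in Set.Ioc (0:ℝ) Hh, ((u (x,s))^2 + ‖fderiv ℝ u (x,s)‖^2) := by
  have huc : Continuous u := hu.continuous
  have hDu : Continuous (fderiv ℝ u) := hu.continuous_fderiv one_ne_zero
  have hcurve : Continuous (fun s : ℝ => ((x : Fin d' → ℝ), s)) :=
    continuous_const.prodMk continuous_id
  set G : ℝ → ℝ := fun s => (u (x,s))^2 + ‖fderiv ℝ u (x,s)‖^2 with hGdef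
  have hGc : Continuous G := by
    exact ((huc.comp hcurve).pow 2).add (((hDu.comp hcurve).norm).pow 2)
  have hGint : IntegrableOn G (Set.Ioc 0 Hh) := hGc.integrableOn_Ioc
  have hG0 : ∀ s, 0 ≤ G s := fun s => by positivity
  set F : ℝ := ∫ s in Set.Ioc (0:ℝ) Hh, G s with hFdef
  have hF0 : 0 ≤ F := setIntegral_nonneg measurableSet_Ioc fun s _ => hG0 s
  -- derivative of s ↦ u(x,s)^2
  set w : ℝ → ℝ := fun s => (2:ℕ) * (u (x,s)) ^ 1 * (fderiv ℝ u (x,s) (0,1)) with hwdef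
  have hder : ∀ s : ℝ, HasDerivAt (fun s => (u (x, s))^2) (w s) s := by
    intro s
    have hc : HasDerivAt (fun s : ℝ => ((x : Fin d' → ℝ), s)) (0, 1) s :=
      (hasDerivAt_const s x).prodMk (hasDerivAt_id s)
    have hd : HasDerivAt (fun s : ℝ => u (x, s)) (fderiv ℝ u (x,s) (0,1)) s :=
      (hu.differentiable one_ne_zero (x,s)).hasFDerivAt.comp_hasDerivAt s hc
    simpa [hwdef] using hd.fun_pow 2
  have hwc : Continuous w := by
    exact (continuous_const.mul ((huc.comp hcurve).pow 1)).mul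
      ((hDu.comp hcurve).clm_apply continuous_const)
  have hwG : ∀ s, |w s| ≤ G s := by
    intro s
    have h1 : |fderiv ℝ u (x,s) (0,1)| ≤ ‖fderiv ℝ u (x,s)‖ := by
      have := (fderiv ℝ u (x,s)).le_opNorm ((0 : Fin d' → ℝ), (1:ℝ))
      simpa [Prod.norm_def] using this
    have h2 : |w s| = 2 * |u (x,s)| * |fderiv ℝ u (x,s) (0,1)| := by
      simp [hwdef, abs_mul, mul_assoc]
    rw [h2]
    have := two_mul_le_add_sq |u (x,s)| |fderiv ℝ u (x,s) (0,1)|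
    calc 2 * |u (x,s)| * |fderiv ℝ u (x,s) (0,1)|
        ≤ |u (x,s)|^2 + |fderiv ℝ u (x,s) (0,1)|^2 := this
      _ ≤ (u (x,s))^2 + ‖fderiv ℝ u (x,s)‖^2 := by
          have h3 : |fderiv ℝ u (x,s) (0,1)|^2 ≤ ‖fderiv ℝ u (x,s)‖^2 :=
            pow_le_pow_left₀ (abs_nonneg _) h1 2
          rw [sq_abs]
          linarith
  -- step 1
  have step1 : ∀ t ∈ Set.Ioc (0:ℝ) Hh, (u (x, b))^2 ≤ (u (x,t))^2 + F := by
    intro t ht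
    have hftc : ∫ s in t..b, w s = (u (x,b))^2 - (u (x,t))^2 :=
      intervalIntegral.integral_eq_sub_of_hasDerivAt (fun s _ => hder s)
        (hwc.intervalIntegrable t b)
    have habs : |∫ s in t..b, w s| ≤ F := by
      rw [← Real.norm_eq_abs]
      refine le_trans (intervalIntegral.norm_integral_le_integral_norm_uIoc) ?_
      have hsub : Set.uIoc t b ⊆ Set.Ioc 0 Hh := by
        rw [Set.uIoc]
        intro s hs
        exact ⟨lt_of_le_of_lt (le_min ht.1.le hb0) hs.1, le_trans hs.2 (max_le ht.2 hbH)⟩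
      calc ∫ s in Set.uIoc t b, ‖w s‖
          ≤ ∫ s in Set.Ioc 0 Hh, ‖w s‖ := by
            refine setIntegral_mono_set (hwc.norm.integrableOn_Ioc) ?_ ?_
            · exact Filter.Eventually.of_forall fun s => norm_nonneg _
            · exact Filter.Eventually.of_forall hsub
        _ ≤ F := by
            refine setIntegral_mono_on (hwc.norm.integrableOn_Ioc) hGint
              measurableSet_Ioc fun s _ => ?_
            simpa [Real.norm_eq_abs] using hwG s
    nlinarith [abs_le.1 habs, hftc]
  -- step 2 : average over t
  have hu2int : IntegrableOn (fun t => (u (x,t))^2) (Set.Ioc 0 Hh) :=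
    ((huc.comp hcurve).pow 2).integrableOn_Ioc
  have hu2F : (∫ t in Set.Ioc (0:ℝ) Hh, (u (x,t))^2) ≤ F := by
    refine setIntegral_mono_on hu2int hGint measurableSet_Ioc fun t _ => ?_
    simp only [hGdef]
    nlinarith [sq_nonneg ‖fderiv ℝ u (x,t)‖]
  have step2 : Hh * (u (x,b))^2 ≤ F + Hh * F := by
    have hconst : ∫ (_ : ℝ) in Set.Ioc (0:ℝ) Hh, (u (x,b))^2 = Hh * (u (x,b))^2 := by
      simp [Real.volume_Ioc, ENNReal.toReal_ofReal hH.le, sub_zero, smul_eq_mul, hH.le]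
    have hmono : (∫ (_ : ℝ) in Set.Ioc (0:ℝ) Hh, (u (x,b))^2)
        ≤ ∫ t in Set.Ioc (0:ℝ) Hh, ((u (x,t))^2 + F) := by
      refine setIntegral_mono_on (integrableOn_const (ne_of_lt ?_))
        (hu2int.add (integrableOn_const (ne_of_lt ?_))) measurableSet_Ioc
        fun t ht => step1 t ht
      · rw [Real.volume_Ioc]; exact ENNReal.ofReal_lt_top
      · rw [Real.volume_Ioc]; exact ENNReal.ofReal_lt_top
    have hsplit : (∫ t in Set.Ioc (0:ℝ) Hh, ((u (x,t))^2 + F))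
        = (∫ t in Set.Ioc (0:ℝ) Hh, (u (x,t))^2) + Hh * F := by
      rw [integral_add hu2int (integrableOn_const (ne_of_lt (by
        rw [Real.volume_Ioc]; exact ENNReal.ofReal_lt_top)))]
      simp [Real.volume_Ioc, ENNReal.toReal_ofReal hH.le, smul_eq_mul, hH.le]
    nlinarith [hconst, hmono, hsplit, hu2F]
  rw [div_mul_eq_mul_div, le_div_iff₀ hH]
  nlinarith [step2]

/-- ε-independent trace estimate on the oscillating graph surface (Lemma 2.3 for a
single height function): for the cylinder `Ω^f = Ω̃ × (0,H)` with `Ω̃` bounded, there is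
`C > 0`, independent of `ε`, such that for every `L`-Lipschitz periodic height function
`γ` with values in `[0,1]`, every `ε ∈ (0,H)` and every (`C¹` representative of an)
`H¹` function `u`, the trace on `Σ_ε = {(x̃, εγ(x̃/ε)) : x̃ ∈ Ω̃}` satisfies
`‖u‖_{L²(Σ_ε)} ≤ C ‖u‖_{H¹(Ω^f)}`. -/
theorem stmt6 (d' : ℕ) (Hh : ℝ) (hH : 0 < Hh) (L : ℝ≥0)
    (Ωt : Set (Fin d' → ℝ)) (hΩt : MeasurableSet Ωt)
    (hΩtb : Bornology.IsBounded Ωt) :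
    ∃ C > (0 : ℝ), ∀ γ : (Fin d' → ℝ) → ℝ, LipschitzWith L γ →
      (∀ x, γ x ∈ Set.Icc (0 : ℝ) 1) →
      (∀ (x : Fin d' → ℝ) (k : Fin d' → ℤ), γ (x + fun i => (k i : ℝ)) = γ x) →
      ∀ ε ∈ Set.Ioo (0 : ℝ) Hh, ∀ u : (Fin d' → ℝ) × ℝ → ℝ, ContDiff ℝ 1 u →
      Real.sqrt (∫ p in (fun x : Fin d' → ℝ => (x, ε * γ (ε⁻¹ • x))) '' Ωt,
          (u p) ^ 2 ∂μH[(d' : ℝ)]) ≤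
        C * Real.sqrt (∫ p in Ωt ×ˢ Set.Ioo (0 : ℝ) Hh,
          ((u p) ^ 2 + ‖fderiv ℝ u p‖ ^ 2)) := by
  classical
  set Kc : ℝ≥0∞ := ((max 1 L : ℝ≥0) : ℝ≥0∞) ^ (d' : ℝ) with hKc
  set cc : ℝ := (1 + Hh) / Hh with hcc
  have hcc0 : 0 ≤ cc := by positivity
  have hKtop : Kc ≠ ∞ := ENNReal.rpow_ne_top_of_nonneg (by positivity) ENNReal.coe_ne_top
  set M : ℝ := (Kc * ENNReal.ofReal cc).toReal with hM
  refine ⟨max 1 (Real.sqrt M), lt_of_lt_of_le one_pos (le_max_left _ _), ?_⟩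
  intro γ hγ hγ01 _hper ε hε u hu
  have hε0 : 0 < ε := hε.1
  have huc : Continuous u := hu.continuous
  have hDu : Continuous (fderiv ℝ u) := hu.continuous_fderiv one_ne_zero
  set G : (Fin d' → ℝ) × ℝ → ℝ := fun p => (u p)^2 + ‖fderiv ℝ u p‖^2 with hGdef
  have hGc : Continuous G := (huc.pow 2).add (hDu.norm.pow 2)
  have hG0 : ∀ p, 0 ≤ G p := fun p => by positivity
  set f : (Fin d' → ℝ) → (Fin d' → ℝ) × ℝ := fun x => (x, ε * γ (ε⁻¹ • x)) with hfdef
  -- Lipschitz bound for the graph map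
  have hg_lip : LipschitzWith L (fun x : Fin d' → ℝ => ε * γ (ε⁻¹ • x)) := by
    refine LipschitzWith.of_dist_le_mul fun x y => ?_
    have h1 : dist (ε * γ (ε⁻¹ • x)) (ε * γ (ε⁻¹ • y))
        = ε * dist (γ (ε⁻¹ • x)) (γ (ε⁻¹ • y)) := by
      rw [Real.dist_eq, Real.dist_eq, ← mul_sub, abs_mul, abs_of_pos hε0]
    have h2 : dist (γ (ε⁻¹ • x)) (γ (ε⁻¹ • y)) ≤ L * dist (ε⁻¹ • x) (ε⁻¹ • y) :=
      hγ.dist_le_mul _ _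
    have h3 : dist (ε⁻¹ • x) (ε⁻¹ • y) = ε⁻¹ * dist x y := by
      rw [dist_smul₀, Real.norm_eq_abs, abs_of_pos (by positivity)]
    rw [h1]
    calc ε * dist (γ (ε⁻¹ • x)) (γ (ε⁻¹ • y))
        ≤ ε * ((L : ℝ) * dist (ε⁻¹ • x) (ε⁻¹ • y)) :=
          mul_le_mul_of_nonneg_left h2 hε0.le
      _ = (L : ℝ) * dist x y := by rw [h3]; field_simp
  have hf_lip : LipschitzWith (max 1 L) f := by
    have := LipschitzWith.prodMk (LipschitzWith.id (α := Fin d' → ℝ)) hg_lip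
    exact this
  have hf_cont : Continuous f := hf_lip.continuous
  have hf_meas : Measurable f := hf_cont.measurable
  -- measure comparison on the surface
  have hmeas_le : (μH[(d' : ℝ)] : Measure ((Fin d' → ℝ) × ℝ)).restrict (f '' Ωt)
      ≤ Kc • ((volume.restrict Ωt).map f) := by
    refine Measure.le_iff.2 fun B hB => ?_
    rw [Measure.restrict_apply hB, Measure.smul_apply, Measure.map_apply hf_meas hB,
      Measure.restrict_apply (hf_meas hB), ← Set.image_preimage_inter]
    calc μH[(d' : ℝ)] (f '' (f ⁻¹' B ∩ Ωt))
        ≤ Kc * μH[(d' : ℝ)] (f ⁻¹' B ∩ Ωt) :=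
          hf_lip.hausdorffMeasure_image_le (by positivity) _
      _ = Kc • volume (f ⁻¹' B ∩ Ωt) := by
          rw [show ((d' : ℝ)) = ((Fintype.card (Fin d') : ℕ) : ℝ) by simp,
            hausdorffMeasure_pi_real]
          rfl
  set A : ℝ≥0∞ := ∫⁻ p in f '' Ωt, ENNReal.ofReal ((u p)^2) ∂μH[(d' : ℝ)] with hA
  set B : ℝ≥0∞ := ∫⁻ p in Ωt ×ˢ Set.Ioo (0:ℝ) Hh, ENNReal.ofReal (G p) with hB
  have hmeasu2 : Measurable fun p : (Fin d' → ℝ) × ℝ => ENNReal.ofReal ((u p)^2) :=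
    (huc.pow 2).measurable.ennreal_ofReal
  have hstep1 : A ≤ Kc * ∫⁻ x in Ωt, ENNReal.ofReal ((u (f x))^2) ∂volume := by
    calc A ≤ ∫⁻ p, ENNReal.ofReal ((u p)^2) ∂(Kc • ((volume.restrict Ωt).map f)) :=
          lintegral_mono' hmeas_le le_rfl
      _ = Kc * ∫⁻ x in Ωt, ENNReal.ofReal ((u (f x))^2) ∂volume := by
          rw [lintegral_smul_measure, lintegral_map hmeasu2 hf_meas, smul_eq_mul]
  -- vertical estimate pointwise
  have hkey : ∀ x : Fin d' → ℝ, ENNReal.ofReal ((u (f x))^2)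
      ≤ ENNReal.ofReal cc * ∫⁻ s in Set.Ioo (0:ℝ) Hh, ENNReal.ofReal (G (x, s)) := by
    intro x
    have hb0 : 0 ≤ ε * γ (ε⁻¹ • x) := mul_nonneg hε0.le (hγ01 _).1
    have hbH : ε * γ (ε⁻¹ • x) ≤ Hh :=
      le_trans (mul_le_of_le_one_right hε0.le (hγ01 _).2) hε.2.le
    have hver := aux_vertical hH hu x hb0 hbH
    have hGxc : Continuous fun s : ℝ => G (x, s) :=
      hGc.comp (continuous_const.prodMk continuous_id)
    have heq : (∫ s in Set.Ioc (0:ℝ) Hh, G (x, s))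
        = (∫⁻ s in Set.Ioc (0:ℝ) Hh, ENNReal.ofReal (G (x, s))).toReal := by
      rw [integral_eq_lintegral_of_nonneg_ae (Filter.Eventually.of_forall fun s => hG0 _)
        hGxc.aestronglyMeasurable]
    calc ENNReal.ofReal ((u (f x))^2)
        ≤ ENNReal.ofReal (cc * ∫ s in Set.Ioc (0:ℝ) Hh, G (x, s)) :=
          ENNReal.ofReal_le_ofReal hver
      _ = ENNReal.ofReal cc * ENNReal.ofReal (∫ s in Set.Ioc (0:ℝ) Hh, G (x, s)) :=
          ENNReal.ofReal_mul hcc0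
      _ ≤ ENNReal.ofReal cc * ∫⁻ s in Set.Ioc (0:ℝ) Hh, ENNReal.ofReal (G (x, s)) := by
          rw [heq]
          exact mul_le_mul_right ENNReal.ofReal_toReal_le _
      _ = ENNReal.ofReal cc * ∫⁻ s in Set.Ioo (0:ℝ) Hh, ENNReal.ofReal (G (x, s)) := by
          rw [Measure.restrict_congr_set Ioo_ae_eq_Ioc]
  -- Tonelli
  have hGmeas : Measurable fun p : (Fin d' → ℝ) × ℝ => ENNReal.ofReal (G p) :=
    hGc.measurable.ennreal_ofReal
  have hTon : (∫⁻ x in Ωt, ∫⁻ s in Set.Ioo (0:ℝ) Hh, ENNReal.ofReal (G (x, s))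
      ∂volume ∂volume) = B := by
    rw [hB, show (volume : Measure ((Fin d' → ℝ) × ℝ)) = Measure.prod volume volume from
      Measure.volume_eq_prod _ _, ← Measure.prod_restrict,
      lintegral_prod _ hGmeas.aemeasurable]
  have hstep2 : A ≤ Kc * ENNReal.ofReal cc * B := by
    calc A ≤ Kc * ∫⁻ x in Ωt, ENNReal.ofReal ((u (f x))^2) ∂volume := hstep1
      _ ≤ Kc * ∫⁻ x in Ωt, (ENNReal.ofReal cc *
            ∫⁻ s in Set.Ioo (0:ℝ) Hh, ENNReal.ofReal (G (x, s))) ∂volume :=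
          mul_le_mul_right (lintegral_mono fun x => hkey x) _
      _ = Kc * (ENNReal.ofReal cc * ∫⁻ x in Ωt,
            (∫⁻ s in Set.Ioo (0:ℝ) Hh, ENNReal.ofReal (G (x, s))) ∂volume) := by
          rw [lintegral_const_mul' _ _ ENNReal.ofReal_ne_top]
      _ = Kc * ENNReal.ofReal cc * B := by rw [hTon, mul_assoc]
  -- finiteness of B
  have hBfin : B ≠ ∞ := by
    have hSb : Bornology.IsBounded (Ωt ×ˢ Set.Ioo (0:ℝ) Hh) :=
      hΩtb.prod (Metric.isBounded_Ioo 0 Hh)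
    obtain ⟨Mb, hMb⟩ := hSb.isCompact_closure.exists_bound_of_continuousOn
      hGc.continuousOn
    have hle : B ≤ ENNReal.ofReal Mb * volume (Ωt ×ˢ Set.Ioo (0:ℝ) Hh) := by
      calc B ≤ ∫⁻ _ in Ωt ×ˢ Set.Ioo (0:ℝ) Hh, ENNReal.ofReal Mb := by
            refine setLIntegral_mono' (hΩt.prod measurableSet_Ioo) fun p hp => ?_
            exact ENNReal.ofReal_le_ofReal ((le_abs_self _).trans
              (by simpa [Real.norm_eq_abs] using hMb p (subset_closure hp)))
        _ = ENNReal.ofReal Mb * volume (Ωt ×ˢ Set.Ioo (0:ℝ) Hh) := by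
            rw [setLIntegral_const]
    exact ne_top_of_le_ne_top (ENNReal.mul_ne_top ENNReal.ofReal_ne_top
      hSb.measure_lt_top.ne) hle
  -- convert Bochner integrals
  have hLHS : (∫ p in f '' Ωt, (u p)^2 ∂μH[(d' : ℝ)]) = A.toReal := by
    rw [hA, integral_eq_lintegral_of_nonneg_ae
      (Filter.Eventually.of_forall fun p => sq_nonneg _) (huc.pow 2).aestronglyMeasurable]
  have hRHS : (∫ p in Ωt ×ˢ Set.Ioo (0:ℝ) Hh, ((u p)^2 + ‖fderiv ℝ u p‖^2)) = B.toReal := by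
    rw [hB, integral_eq_lintegral_of_nonneg_ae
      (Filter.Eventually.of_forall fun p => hG0 p) hGc.aestronglyMeasurable]
  have hABfin : Kc * ENNReal.ofReal cc * B ≠ ∞ :=
    ENNReal.mul_ne_top (ENNReal.mul_ne_top hKtop ENNReal.ofReal_ne_top) hBfin
  have hmain : A.toReal ≤ M * B.toReal := by
    calc A.toReal ≤ (Kc * ENNReal.ofReal cc * B).toReal :=
          ENNReal.toReal_mono hABfin hstep2
      _ = M * B.toReal := by rw [ENNReal.toReal_mul]
  rw [hLHS, hRHS]
  calc Real.sqrt A.toReal ≤ Real.sqrt (M * B.toReal) := Real.sqrt_le_sqrt hmain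
    _ = Real.sqrt M * Real.sqrt B.toReal := Real.sqrt_mul (by positivity) _
    _ ≤ max 1 (Real.sqrt M) * Real.sqrt B.toReal := by
        exact mul_le_mul_of_nonneg_right (le_max_right _ _) (Real.sqrt_nonneg _)
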